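/- Under the setup of Lemma 2.5 (z₁ a type-2 approximation with precision ε of the minimizer of z ↦ g(z) + (1/(2τ))‖z − (z₀ − D⁻¹u)‖²_D, and z₂ a type-1 approximation with precision ε of the minimizer of z ↦ g(z) + (1/(2τ))‖z − (z₀ − D⁻¹v)‖²_D), one has ‖z₁ − z₂‖²_D ≤ (√(2τε) + ‖u − v‖_{D⁻¹})·‖z₁ − z₂‖_D + 2τε. -/

import Mathlib

open Matrix

/-- squared M-norm: ⟨x, M x⟩ -/
noncomputable def sqnorm {d : ℕ} (M : Matrix (Fin d) (Fin d) ℝ) (x : Fin d → ℝ) : ℝ :=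
  x ⬝ᵥ M.mulVec x

/-- M-norm: √⟨x, M x⟩ -/
noncomputable def mnorm {d : ℕ} (M : Matrix (Fin d) (Fin d) ℝ) (x : Fin d → ℝ) : ℝ :=
  Real.sqrt (x ⬝ᵥ M.mulVec x)

lemma sym_dot {d : ℕ} {D : Matrix (Fin d) (Fin d) ℝ} (hD : D.PosDef) (x y : Fin d → ℝ) :
    x ⬝ᵥ D.mulVec y = y ⬝ᵥ D.mulVec x := by
  have hsym : Dᵀ = D := by simpa using hD.1.eq
  rw [Matrix.dotProduct_mulVec, ← Matrix.mulVec_transpose, hsym]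
  exact (dotProduct_comm _ _)

lemma dot_nonneg' {d : ℕ} {D : Matrix (Fin d) (Fin d) ℝ} (hD : D.PosDef) (x : Fin d → ℝ) :
    0 ≤ x ⬝ᵥ D.mulVec x := hD.posSemidef.re_dotProduct_nonneg x

lemma cs_dot {d : ℕ} {D : Matrix (Fin d) (Fin d) ℝ} (hD : D.PosDef) (x y : Fin d → ℝ) :
    (x ⬝ᵥ D.mulVec y)^2 ≤ (x ⬝ᵥ D.mulVec x) * (y ⬝ᵥ D.mulVec y) := by
  by_cases hy : y = 0
  · simp [hy, Matrix.mulVec_zero]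
  · have hypos : 0 < y ⬝ᵥ D.mulVec y := by
      have := hD.dotProduct_mulVec_pos hy
      simpa using this
    set α := y ⬝ᵥ D.mulVec y with hα
    set β := x ⬝ᵥ D.mulVec y with hβ
    have hexp : (α • x - β • y) ⬝ᵥ D.mulVec (α • x - β • y)
        = α^2 * (x ⬝ᵥ D.mulVec x) - 2*α*β*(x ⬝ᵥ D.mulVec y) + β^2 * α := by
      simp only [Matrix.mulVec_sub, Matrix.mulVec_smul, dotProduct_sub, sub_dotProduct,
        dotProduct_smul, smul_dotProduct, smul_eq_mul]
      rw [sym_dot hD y x]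
      ring
    have h0 := dot_nonneg' hD (α • x - β • y)
    rw [hexp] at h0
    nlinarith [h0, hypos]

set_option maxHeartbeats 1000000 in
/-- Key quadratic inequality for the distance between inexact proximal points. -/
theorem dist_sq_ineq {d : ℕ}
    (D : Matrix (Fin d) (Fin d) ℝ) (hD : D.PosDef)
    (τ : ℝ) (hτ : 0 < τ) (ε : ℝ) (hε : 0 < ε)
    (g : (Fin d → ℝ) → ℝ) (hconv : ConvexOn ℝ Set.univ g)
    (z₀ u v z₁ z₂ : Fin d → ℝ)
    (h1 : ∀ x, g x ≥ g z₁ +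
        ((1 / τ) • D.mulVec (z₀ - D⁻¹.mulVec u - z₁)) ⬝ᵥ (x - z₁) - ε)
    (h2 : ∀ x, g x + (1 / (2 * τ)) * sqnorm D (x - (z₀ - D⁻¹.mulVec v))
        ≥ g z₂ + (1 / (2 * τ)) * sqnorm D (z₂ - (z₀ - D⁻¹.mulVec v)) - ε) :
    sqnorm D (z₁ - z₂)
      ≤ (Real.sqrt (2 * τ * ε) + mnorm D⁻¹ (u - v)) * mnorm D (z₁ - z₂) + 2 * τ * ε := by
  have hDinv : D.mulVec (D⁻¹.mulVec (v - u)) = v - u := by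
    rw [Matrix.mulVec_mulVec, Matrix.mul_nonsing_inv _
      (isUnit_iff_ne_zero.mpr (ne_of_gt hD.det_pos)), Matrix.one_mulVec]
  -- abbreviations
  set w₁ : Fin d → ℝ := z₀ - D⁻¹.mulVec u with hw₁
  set w₂ : Fin d → ℝ := z₀ - D⁻¹.mulVec v with hw₂
  set a : Fin d → ℝ := z₁ - z₂ with ha
  set Q : ℝ := a ⬝ᵥ D.mulVec a with hQ
  set P : ℝ := (z₂ - w₂) ⬝ᵥ D.mulVec a with hP
  set S : ℝ := (w₁ - z₁) ⬝ᵥ D.mulVec a with hS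
  set K : ℝ := (D⁻¹.mulVec (v - u)) ⬝ᵥ D.mulVec a with hK
  set R : ℝ := sqnorm D (z₂ - w₂) with hR
  set na : ℝ := mnorm D a with hna
  set c : ℝ := mnorm D⁻¹ (u - v) with hc
  set s : ℝ := Real.sqrt (2 * τ * ε) with hs
  have hQnn : 0 ≤ Q := dot_nonneg' hD a
  have hna2 : na^2 = Q := Real.sq_sqrt hQnn
  have hnann : 0 ≤ na := Real.sqrt_nonneg _
  have hcnn : 0 ≤ c := Real.sqrt_nonneg _
  have hspos : 0 < s := Real.sqrt_pos.mpr (by positivity)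
  have hs2 : s^2 = 2 * τ * ε := Real.sq_sqrt (by positivity)
  -- (i)  S + P = K - Q
  have hSP : S + P = K - Q := by
    have hvec : (w₁ - z₁) + (z₂ - w₂) = D⁻¹.mulVec (v - u) - a := by
      rw [hw₁, hw₂, ha, Matrix.mulVec_sub]
      abel
    calc S + P = ((w₁ - z₁) + (z₂ - w₂)) ⬝ᵥ D.mulVec a := by
          rw [add_dotProduct]
      _ = (D⁻¹.mulVec (v - u) - a) ⬝ᵥ D.mulVec a := by rw [hvec]
      _ = K - Q := by rw [sub_dotProduct]
  -- (ii) K ≤ c * na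
  have hKcs : K ≤ c * na := by
    have hx : (D⁻¹.mulVec (v - u)) ⬝ᵥ D.mulVec (D⁻¹.mulVec (v - u))
        = sqnorm D⁻¹ (u - v) := by
      rw [hDinv, sqnorm]
      have h1' : (D⁻¹.mulVec (v - u)) ⬝ᵥ (v - u) = (v - u) ⬝ᵥ D⁻¹.mulVec (v - u) :=
        dotProduct_comm _ _
      rw [h1']
      have : (v - u) = -(u - v) := by abel
      rw [this, Matrix.mulVec_neg, dotProduct_neg, neg_dotProduct, neg_neg]
    have hcs := cs_dot hD (D⁻¹.mulVec (v - u)) a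
    rw [hx] at hcs
    have hc2 : c^2 = sqnorm D⁻¹ (u - v) := by
      rw [hc, mnorm, Real.sq_sqrt (dot_nonneg' hD.inv (u - v))]
      rfl
    have hcs' : K^2 ≤ (c * na)^2 := by
      rw [mul_pow, hna2]
      calc K^2 ≤ sqnorm D⁻¹ (u - v) * Q := hcs
        _ = c^2 * Q := by rw [hc2]
    nlinarith [mul_nonneg hcnn hnann]
  rw [show sqnorm D a = Q from rfl]
  clear_value Q P S K R na c s
  clear_value w₁ w₂ a
  -- key scalar inequality for t ∈ (0,1]
  have key : ∀ t : ℝ, 0 < t → t ≤ 1 → 0 ≤ S + P + (t/2) * Q + τ*ε + τ*ε/t := by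
    intro t ht0 ht1
    -- h1 at z₂
    have hB : g z₁ - g z₂ ≤ (1/τ) * S + ε := by
      have h := h1 z₂
      have hdot : ((1 / τ) • D.mulVec (w₁ - z₁)) ⬝ᵥ (z₂ - z₁)
          = -((1/τ) * S) := by
        rw [smul_dotProduct, smul_eq_mul]
        have h1' : (D.mulVec (w₁ - z₁)) ⬝ᵥ (z₂ - z₁)
            = (w₁ - z₁) ⬝ᵥ D.mulVec (z₂ - z₁) := by
          rw [dotProduct_comm, sym_dot hD]
        rw [h1']
        have h2' : z₂ - z₁ = -a := by rw [ha]; abel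
        rw [h2', Matrix.mulVec_neg, dotProduct_neg, ← hS]
        ring
      rw [hdot] at h
      linarith
    -- h2 at x = z₂ + t • a, with convexity
    set x : Fin d → ℝ := z₂ + t • a with hx
    have hcv : g x ≤ (1-t) * g z₂ + t * g z₁ := by
      have := hconv.2 (Set.mem_univ z₂) (Set.mem_univ z₁)
        (by linarith : (0:ℝ) ≤ 1 - t) (le_of_lt ht0) (by ring)
      have hxe : (1-t) • z₂ + t • z₁ = x := by
        rw [hx, ha]
        module
      rw [hxe] at this
      simpa using this
    have hexp : sqnorm D (x - w₂) = R + 2*t*P + t^2*Q := by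
      have hxe : x - w₂ = (z₂ - w₂) + t • a := by rw [hx]; abel
      rw [sqnorm, hxe]
      simp only [Matrix.mulVec_add, Matrix.mulVec_smul, dotProduct_add, add_dotProduct,
        dotProduct_smul, smul_dotProduct, smul_eq_mul]
      rw [sym_dot hD a (z₂ - w₂), hR, sqnorm, hP, hQ]
      ring
    have hgx := h2 x
    rw [hexp] at hgx
    -- combine
    have hA : -(t * (g z₁ - g z₂)) ≤ (1/(2*τ)) * (2*t*P + t^2*Q) + ε := by
      have h2τ : (0:ℝ) < 2*τ := by linarith
      have := hgx
      nlinarith [this, hcv]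
    -- 0 ≤ t*(G) + rhs with G ≤ (1/τ)S + ε
    have step1 : 0 ≤ t * ((1/τ)*S + ε) + (1/(2*τ)) * (2*t*P + t^2*Q) + ε := by
      nlinarith [mul_le_mul_of_nonneg_left hB (le_of_lt ht0), hA]
    -- multiply by τ/t
    have hτt : 0 < τ / t := by positivity
    have step2 : 0 ≤ (τ/t) * (t * ((1/τ)*S + ε) + (1/(2*τ)) * (2*t*P + t^2*Q) + ε) :=
      mul_nonneg (le_of_lt hτt) step1
    have heq : (τ/t) * (t * ((1/τ)*S + ε) + (1/(2*τ)) * (2*t*P + t^2*Q) + ε)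
        = S + P + (t/2) * Q + τ*ε + τ*ε/t := by
      field_simp
      ring
    linarith [heq ▸ step2]
  by_cases hcase : na ≤ s
  · nlinarith [mul_nonneg hcnn hnann, hs2]
  · push_neg at hcase
    have hnapos : 0 < na := lt_trans hspos hcase
    have ht0 : 0 < s / na := by positivity
    have ht1 : s / na ≤ 1 := by
      rw [div_le_one hnapos]; exact le_of_lt hcase
    have hk := key (s/na) ht0 ht1
    rw [hSP] at hk
    -- Q ≤ K + (t/2) Q + τε + τε/t  with t = s/na
    have hdiv : τ*ε/(s/na) = τ*ε*na/s := by
      field_simp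
    rw [hdiv] at hk
    -- τε = s²/2, so τε*na/s = s*na/2 and (s/na)/2*Q = s*na/2
    have e1 : τ*ε*na/s = s*na/2 := by
      have : τ*ε = s^2/2 := by nlinarith [hs2]
      rw [this]
      field_simp
    have e2 : ((s/na)/2) * Q = s*na/2 := by
      rw [← hna2]
      field_simp
    rw [e1, e2] at hk
    -- hk : 0 ≤ K - Q + s*na/2 + τ*ε + s*na/2
    nlinarith [hKcs, hs2]
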